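/- Let v_F(x, y, t) be the conditional Föllmer velocity field with |X|_∞ ≤ 1 a.s. Then ∇_x v_F(x, y, t) = (−t/(1−t²))·I_{d_x} + (t/(1−t²)²)·Cov(X | W_t = x, Y = y), where W_t = tX + √(1−t²)W and Cov denotes the conditional covariance matrix. -/

import Mathlib

open MeasureTheory Set
open scoped ENNReal RealInnerProductSpace

noncomputable section
set_option maxHeartbeats 1000000
set_option synthInstance.maxHeartbeats 200000
set_option maxRecDepth 8000

section FollmerAux

variable {d : ℕ} {H : Type*} [NormedAddCommGroup H] [NormedSpace ℝ H]

lemma gauss_cont (t s : ℝ) (x : EuclideanSpace ℝ (Fin d)) :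
    Continuous (fun u : EuclideanSpace ℝ (Fin d) =>
      Real.exp (-‖x - t • u‖^2/(2*s))) := by fun_prop

lemma gauss_le_one (t s : ℝ) (hs : 0 < s) (x u : EuclideanSpace ℝ (Fin d)) :
    Real.exp (-‖x - t • u‖^2/(2*s)) ≤ 1 := by
  rw [show (1:ℝ) = Real.exp 0 by simp]
  apply Real.exp_le_exp.2
  apply div_nonpos_of_nonpos_of_nonneg
  · simp [sq_nonneg]
  · linarith

lemma integrable_weight (t s : ℝ) (hs : 0 < s)
    {q : EuclideanSpace ℝ (Fin d) → ℝ} (hq0 : ∀ u, 0 ≤ q u) (hqm : Measurable q)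
    (hqi : Integrable q)
    (g : EuclideanSpace ℝ (Fin d) → H) (hg : Continuous g) {C : ℝ}
    (hgC : ∀ u, q u ≠ 0 → ‖g u‖ ≤ C) (x : EuclideanSpace ℝ (Fin d)) :
    Integrable (fun u => (q u * Real.exp (-‖x - t • u‖^2/(2*s))) • g u) := by
  refine Integrable.mono' (hqi.const_mul C) ?_ (Filter.Eventually.of_forall fun u => ?_)
  · exact ((hqm.mul (gauss_cont t s x).measurable).aestronglyMeasurable).smul
      hg.stronglyMeasurable.aestronglyMeasurable
  · rw [norm_smul]
    rcases eq_or_ne (q u) 0 with h | h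
    · simp [h]
    · have h1 : 0 ≤ q u * Real.exp (-‖x - t • u‖^2/(2*s)) :=
        mul_nonneg (hq0 u) (Real.exp_nonneg _)
      rw [Real.norm_eq_abs, abs_of_nonneg h1]
      calc q u * Real.exp (-‖x - t • u‖^2/(2*s)) * ‖g u‖
          ≤ q u * 1 * C := by
            apply mul_le_mul (by
              apply mul_le_mul_of_nonneg_left (gauss_le_one t s hs x u) (hq0 u))
              (hgC u h) (norm_nonneg _) (by simpa using hq0 u)
        _ = C * q u := by ring

lemma hasFDerivAt_gauss (s : ℝ) (c x : EuclideanSpace ℝ (Fin d)) :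
    HasFDerivAt (fun x : EuclideanSpace ℝ (Fin d) => Real.exp (-‖x - c‖^2/(2*s)))
      ((Real.exp (-‖x - c‖^2/(2*s)) * -(1/s)) • innerSL ℝ (x - c)) x := by
  have h1 : HasFDerivAt (fun x : EuclideanSpace ℝ (Fin d) => ‖x - c‖^2)
      ((2:ℝ) • innerSL ℝ (x - c)) x := by
    have h := ((hasFDerivAt_id x).sub_const c).inner ℝ ((hasFDerivAt_id x).sub_const c)
    have : (fun x : EuclideanSpace ℝ (Fin d) => ‖x - c‖^2)
        = fun x => ⟪x - c, x - c⟫ := by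
      funext z; rw [real_inner_self_eq_norm_sq]
    rw [this]
    refine h.congr_fderiv ?_
    ext v
    simp only [ContinuousLinearMap.coe_smul', Pi.smul_apply, innerSL_apply_apply,
      ContinuousLinearMap.coe_comp', Function.comp_apply, ContinuousLinearMap.prod_apply,
      ContinuousLinearMap.coe_id', id_eq, fderivInnerCLM_apply, smul_eq_mul]
    rw [real_inner_comm]; ring
  have h2 : HasFDerivAt (fun x : EuclideanSpace ℝ (Fin d) => -‖x - c‖^2/(2*s))
      ((-(1/(2*s)) * 2) • innerSL ℝ (x - c)) x := by
    have := h1.const_mul (-(1/(2*s)))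
    rw [show (fun x : EuclideanSpace ℝ (Fin d) => -‖x - c‖^2/(2*s))
        = fun y => -(1/(2*s)) * ‖y - c‖^2 by funext z; ring]
    refine this.congr_fderiv ?_
    ext v; simp; ring
  have h3 := h2.exp
  refine h3.congr_fderiv ?_
  ext v
  simp
  ring

lemma smul_smulRight (c : ℝ) (L : EuclideanSpace ℝ (Fin d) →L[ℝ] ℝ) (y : H) :
    (c • L).smulRight y = c • (L.smulRight y) := by
  ext v
  simp only [ContinuousLinearMap.smulRight_apply, ContinuousLinearMap.smul_apply,
    ContinuousLinearMap.coe_smul', Pi.smul_apply, smul_eq_mul, mul_smul]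

lemma hasFDerivAt_weight_integral (t s : ℝ) (hs : 0 < s)
    {q : EuclideanSpace ℝ (Fin d) → ℝ} (hq0 : ∀ u, 0 ≤ q u) (hqm : Measurable q)
    (hqi : Integrable q) {R : ℝ} (hR : 0 ≤ R)
    (hqR : ∀ u, q u ≠ 0 → ‖u‖ ≤ R)
    (g : EuclideanSpace ℝ (Fin d) → H) (hg : Continuous g) {C : ℝ} (hC : 0 ≤ C)
    (hgC : ∀ u, q u ≠ 0 → ‖g u‖ ≤ C) (x₀ : EuclideanSpace ℝ (Fin d)) :
    HasFDerivAt (fun x => ∫ u, (q u * Real.exp (-‖x - t • u‖^2/(2*s))) • g u)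
      (∫ u, ((q u * Real.exp (-‖x₀ - t • u‖^2/(2*s)) * -(1/s)) •
        innerSL ℝ (x₀ - t • u)).smulRight (g u)) x₀ ∧
    Integrable (fun u => ((q u * Real.exp (-‖x₀ - t • u‖^2/(2*s)) * -(1/s)) •
        innerSL ℝ (x₀ - t • u)).smulRight (g u)) := by
  set F' : EuclideanSpace ℝ (Fin d) → EuclideanSpace ℝ (Fin d) →
      (EuclideanSpace ℝ (Fin d) →L[ℝ] H) := fun x u =>
    ((q u * Real.exp (-‖x - t • u‖^2/(2*s)) * -(1/s)) •
      innerSL ℝ (x - t • u)).smulRight (g u) with hF'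
  set K : ℝ := (1/s) * ((‖x₀‖ + 1 + |t| * R) * C) with hK
  have hbound : ∀ u, ∀ x ∈ Metric.ball x₀ (1:ℝ), ‖F' x u‖ ≤ K * q u := by
    intro u x hx
    rcases eq_or_ne (q u) 0 with h | h
    · simp [hF', h]
    · rw [hF', ContinuousLinearMap.norm_smulRight_apply, norm_smul, innerSL_apply_norm,
        Real.norm_eq_abs]
      have e1 : |q u * Real.exp (-‖x - t • u‖^2/(2*s)) * -(1/s)|
          = q u * Real.exp (-‖x - t • u‖^2/(2*s)) * (1/s) := by
        rw [abs_mul, abs_mul, abs_of_nonneg (hq0 u),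
          abs_of_nonneg (Real.exp_nonneg _), abs_neg,
          abs_of_nonneg (by positivity : (0:ℝ) ≤ 1/s)]
      rw [e1]
      have e2 : ‖x - t • u‖ ≤ ‖x₀‖ + 1 + |t| * R := by
        have hxx : ‖x - x₀‖ < 1 := by
          rw [← dist_eq_norm]; exact Metric.mem_ball.1 hx
        calc ‖x - t • u‖ = ‖(x - x₀) + (x₀ - t • u)‖ := by abel_nf
          _ ≤ ‖x - x₀‖ + ‖x₀ - t • u‖ := norm_add_le _ _
          _ ≤ ‖x - x₀‖ + (‖x₀‖ + ‖t • u‖) := by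
              exact add_le_add_right (norm_sub_le _ _) _
          _ ≤ 1 + (‖x₀‖ + |t| * R) := by
              apply add_le_add (le_of_lt hxx)
              apply add_le_add_right
              rw [norm_smul, Real.norm_eq_abs]
              exact mul_le_mul_of_nonneg_left (hqR u h) (abs_nonneg t)
          _ = ‖x₀‖ + 1 + |t| * R := by ring
      have e3 : ‖g u‖ ≤ C := hgC u h
      have e4 : Real.exp (-‖x - t • u‖^2/(2*s)) ≤ 1 := gauss_le_one t s hs x u
      calc q u * Real.exp (-‖x - t • u‖^2/(2*s)) * (1/s) * ‖x - t • u‖ * ‖g u‖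
          ≤ q u * 1 * (1/s) * (‖x₀‖ + 1 + |t| * R) * C := by
            gcongr
            all_goals first
              | exact hq0 u | exact e4 | exact e2 | exact e3
              | ((repeat' apply mul_nonneg) <;> first | exact hq0 u | positivity)
        _ = K * q u := by rw [hK]; ring
  have hF'meas : AEStronglyMeasurable (F' x₀) volume := by
    have hrw : F' x₀ = fun u => (q u * Real.exp (-‖x₀ - t • u‖^2/(2*s)) * -(1/s)) •
        ((innerSL ℝ (x₀ - t • u)).smulRight (g u)) := by
      funext u; simp only [hF']; rw [smul_smulRight]
    rw [hrw]
    have hc1 : Continuous fun u : EuclideanSpace ℝ (Fin d) =>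
        (innerSL ℝ (x₀ - t • u)).smulRight (g u) := by
      have c1 : Continuous fun u : EuclideanSpace ℝ (Fin d) =>
          innerSL ℝ (x₀ - t • u) := (innerSL ℝ).continuous.comp (by fun_prop)
      exact (((ContinuousLinearMap.smulRightL ℝ (EuclideanSpace ℝ (Fin d)) H).continuous.comp
        c1).clm_apply hg)
    exact (((hqm.mul (gauss_cont t s x₀).measurable).mul_const
      (-(1/s))).aestronglyMeasurable).smul hc1.stronglyMeasurable.aestronglyMeasurable
  have hF'int : Integrable (F' x₀) := by
    refine Integrable.mono' (hqi.const_mul K) hF'meas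
      (Filter.Eventually.of_forall fun u => hbound u x₀ (Metric.mem_ball_self one_pos))
  refine ⟨?_, hF'int⟩
  apply hasFDerivAt_integral_of_dominated_of_fderiv_le (bound := fun u => K * q u)
    (Metric.ball_mem_nhds x₀ one_pos) ?_ (integrable_weight t s hs hq0 hqm hqi g hg hgC x₀) hF'meas
    (Filter.Eventually.of_forall fun u x hx => hbound u x hx) (hqi.const_mul K)
    (Filter.Eventually.of_forall fun u x _ => ?_)
  · exact Filter.Eventually.of_forall fun x =>
      ((hqm.mul (gauss_cont t s x).measurable).aestronglyMeasurable).smul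
        hg.stronglyMeasurable.aestronglyMeasurable
  · have h := ((hasFDerivAt_gauss s (t • u) x).const_mul (q u)).smul_const (g u)
    refine h.congr_fderiv ?_
    simp only [hF']
    rw [smul_smul, mul_assoc]

lemma weight_pos (t s : ℝ) (hs : 0 < s)
    {q : EuclideanSpace ℝ (Fin d) → ℝ} (hq0 : ∀ u, 0 ≤ q u) (hqm : Measurable q)
    (hqi : Integrable q) {R : ℝ}
    (hqR : ∀ u, q u ≠ 0 → ‖u‖ ≤ R) (hq1 : ∫ u, q u = 1)
    (x : EuclideanSpace ℝ (Fin d)) :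
    0 < ∫ u, q u * Real.exp (-‖x - t • u‖^2/(2*s)) := by
  set ε : ℝ := Real.exp (-(‖x‖ + |t| * R)^2/(2*s)) with hε
  have hεpos : 0 < ε := Real.exp_pos _
  have hint : Integrable (fun u => q u * Real.exp (-‖x - t • u‖^2/(2*s))) := by
    have := integrable_weight t s hs hq0 hqm hqi (fun _ => (1:ℝ)) continuous_const
      (C := 1) (fun u _ => by simp) x
    simpa using this
  have hle : ∀ u, ε * q u ≤ q u * Real.exp (-‖x - t • u‖^2/(2*s)) := by
    intro u
    rcases eq_or_ne (q u) 0 with h | h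
    · simp [h]
    · rw [mul_comm ε (q u)]
      apply mul_le_mul_of_nonneg_left _ (hq0 u)
      apply Real.exp_le_exp.2
      have hB : ‖x - t • u‖ ≤ ‖x‖ + |t| * R := by
        calc ‖x - t • u‖ ≤ ‖x‖ + ‖t • u‖ := norm_sub_le _ _
          _ = ‖x‖ + |t| * ‖u‖ := by rw [norm_smul, Real.norm_eq_abs]
          _ ≤ ‖x‖ + |t| * R :=
            add_le_add_right (mul_le_mul_of_nonneg_left (hqR u h) (abs_nonneg t)) _
      have hsq : ‖x - t • u‖^2 ≤ (‖x‖ + |t| * R)^2 := by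
        nlinarith [norm_nonneg (x - t • u)]
      rw [div_le_div_iff_of_pos_right (by linarith : (0:ℝ) < 2*s)]
      linarith
  have h1 : ε * 1 ≤ ∫ u, q u * Real.exp (-‖x - t • u‖^2/(2*s)) := by
    rw [show ε * 1 = ε • ∫ u, q u by rw [hq1]; simp]
    rw [← integral_smul]
    exact integral_mono (hqi.smul ε) hint fun u => hle u
  linarith

end FollmerAux

/-- let `p(·|y)` be the conditional density of `X` given `Y = y`,
supported in the unit cube (`|X|_∞ ≤ 1` a.s.), let
`w(x,y,u) = p(u|y) exp(−‖x−tu‖²/(2(1−t²)))`, `Z(x,y) = ∫ w(x,y,u) du`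
(so that `f_t(x|y) = (2π(1−t²))^{−d/2} Z(x,y)` is the conditional density of
`W_t = tX + √(1−t²)W` given `Y = y`), and let
`v_F(x,y) = (1/t)∇_x log f_t(x|y) + x/t` be the conditional Föllmer velocity.
Then `∇_x v_F = (−t/(1−t²)) I_d + (t/(1−t²)²) Cov(X | W_t = x, Y = y)`, where
the conditional covariance is expressed through the weight `w/Z`. -/
theorem stmt6 {d dy : ℕ} (t : ℝ) (ht : t ∈ Set.Ioo (0 : ℝ) 1)
    (p : EuclideanSpace ℝ (Fin d) → EuclideanSpace ℝ (Fin dy) → ℝ)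
    (hp0 : ∀ u y, 0 ≤ p u y)
    (hpsupp : ∀ u y, p u y ≠ 0 → ∀ i, |u i| ≤ 1)
    (hpmeas : ∀ y, Measurable fun u => p u y)
    (hpint : ∀ y, ∫ u, p u y = 1)
    (w : EuclideanSpace ℝ (Fin d) → EuclideanSpace ℝ (Fin dy) →
      EuclideanSpace ℝ (Fin d) → ℝ)
    (hw : w = fun x y u => p u y * Real.exp (-‖x - t • u‖ ^ 2 / (2 * (1 - t ^ 2))))
    (Z : EuclideanSpace ℝ (Fin d) → EuclideanSpace ℝ (Fin dy) → ℝ)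
    (hZ : Z = fun x y => ∫ u, w x y u)
    (vF : EuclideanSpace ℝ (Fin d) → EuclideanSpace ℝ (Fin dy) →
      EuclideanSpace ℝ (Fin d))
    (hvF : vF = fun x y =>
      (1 / t) • gradient
          (fun x' => Real.log ((2 * Real.pi * (1 - t ^ 2)) ^ (-(d : ℝ) / 2) * Z x' y)) x
        + (1 / t) • x) :
    ∀ (x : EuclideanSpace ℝ (Fin d)) (y : EuclideanSpace ℝ (Fin dy))
      (u v : EuclideanSpace ℝ (Fin d)),
      ⟪(fderiv ℝ (fun x' => vF x' y) x) u, v⟫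
        = (-(t / (1 - t ^ 2))) * ⟪u, v⟫
          + (t / (1 - t ^ 2) ^ 2) *
            ((∫ a, (w x y a / Z x y) * (⟪u, a⟫ * ⟪v, a⟫))
              - (∫ a, (w x y a / Z x y) * ⟪u, a⟫) * ∫ a, (w x y a / Z x y) * ⟪v, a⟫) := by
  obtain ⟨ht0, ht1⟩ := ht
  subst hw hZ hvF
  intro x y u v
  set s : ℝ := 1 - t^2 with hsdef
  have hs : 0 < s := by rw [hsdef]; nlinarith
  clear_value s
  have hsne : s ≠ 0 := ne_of_gt hs
  have htne : t ≠ 0 := ne_of_gt ht0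
  have hq0 : ∀ u, 0 ≤ p u y := fun u => hp0 u y
  have hqm : Measurable (fun u => p u y) := hpmeas y
  have hqi : Integrable (fun u => p u y) := by
    by_contra hcon
    have h1 := hpint y
    rw [integral_undef hcon] at h1
    norm_num at h1
  have hqR : ∀ u : EuclideanSpace ℝ (Fin d), p u y ≠ 0 → ‖u‖ ≤ Real.sqrt d := by
    intro u hu
    rw [EuclideanSpace.norm_eq]
    apply Real.sqrt_le_sqrt
    calc ∑ i, ‖u i‖^2 ≤ ∑ _i : Fin d, (1:ℝ) := by
          apply Finset.sum_le_sum
          intro i _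
          have := hpsupp u y hu i
          rw [Real.norm_eq_abs]
          nlinarith [abs_nonneg (u i)]
      _ = d := by simp
  have hR : (0:ℝ) ≤ Real.sqrt d := Real.sqrt_nonneg _
  set C₀ : ℝ := (2 * Real.pi * s) ^ (-(d:ℝ)/2) with hC₀def
  have hC₀ : 0 < C₀ := Real.rpow_pos_of_pos (by positivity) _
  clear_value C₀
  have hZpos : ∀ z : EuclideanSpace ℝ (Fin d),
      0 < ∫ u, p u y * Real.exp (-‖z - t • u‖^2/(2*s)) := fun z =>
    weight_pos t s hs hq0 hqm hqi hqR (hpint y) z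
  have hZne : ∀ z, (∫ u, p u y * Real.exp (-‖z - t • u‖^2/(2*s))) ≠ 0 :=
    fun z => ne_of_gt (hZpos z)
  have hWint := fun (z : EuclideanSpace ℝ (Fin d)) => hasFDerivAt_weight_integral
    t s hs hq0 hqm hqi hR hqR (fun _ => (1:ℝ)) continuous_const (C := 1) zero_le_one
    (fun u _ => by simp) z
  have hZder : ∀ z : EuclideanSpace ℝ (Fin d),
      HasFDerivAt (fun x => ∫ u, p u y * Real.exp (-‖x - t • u‖^2/(2*s)))
        (∫ u, ((p u y * Real.exp (-‖z - t • u‖^2/(2*s)) * -(1/s)) •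
          innerSL ℝ (z - t • u)).smulRight (1:ℝ)) z := by
    intro z
    have h := (hWint z).1
    simpa only [smul_eq_mul, mul_one] using h
  have hZdint : ∀ z : EuclideanSpace ℝ (Fin d),
      Integrable (fun u => ((p u y * Real.exp (-‖z - t • u‖^2/(2*s)) * -(1/s)) •
        innerSL ℝ (z - t • u)).smulRight (1:ℝ)) := fun z => (hWint z).2
  have hVint := fun (z : EuclideanSpace ℝ (Fin d)) => hasFDerivAt_weight_integral
    t s hs hq0 hqm hqi hR hqR (fun u => u) continuous_id (C := Real.sqrt d) hR hqR z
  have hIder : ∀ z : EuclideanSpace ℝ (Fin d),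
      HasFDerivAt (fun x => ∫ u, (p u y * Real.exp (-‖x - t • u‖^2/(2*s))) • u)
        (∫ u, ((p u y * Real.exp (-‖z - t • u‖^2/(2*s)) * -(1/s)) •
          innerSL ℝ (z - t • u)).smulRight u) z := fun z => (hVint z).1
  have hIdint : ∀ z : EuclideanSpace ℝ (Fin d),
      Integrable (fun u => ((p u y * Real.exp (-‖z - t • u‖^2/(2*s)) * -(1/s)) •
        innerSL ℝ (z - t • u)).smulRight u) := fun z => (hVint z).2
  -- basic scalar integrabilities
  have hW0 : ∀ z : EuclideanSpace ℝ (Fin d),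
      Integrable (fun u => p u y * Real.exp (-‖z - t • u‖^2/(2*s))) := by
    intro z
    have h := integrable_weight t s hs hq0 hqm hqi (fun _ => (1:ℝ)) continuous_const
      (C := 1) (fun u _ => by simp) z
    simpa only [smul_eq_mul, mul_one] using h
  have hW1 : ∀ (z ξ : EuclideanSpace ℝ (Fin d)),
      Integrable (fun u => p u y * Real.exp (-‖z - t • u‖^2/(2*s)) * ⟪ξ, u⟫) := by
    intro z ξ
    have h := integrable_weight t s hs hq0 hqm hqi (fun u => ⟪ξ, u⟫)
      (continuous_const.inner continuous_id) (C := ‖ξ‖ * Real.sqrt d)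
      (fun u hu => by
        rw [Real.norm_eq_abs]
        calc |⟪ξ, u⟫| ≤ ‖ξ‖ * ‖u‖ := abs_real_inner_le_norm _ _
          _ ≤ ‖ξ‖ * Real.sqrt d := by
              exact mul_le_mul_of_nonneg_left (hqR u hu) (norm_nonneg ξ)) z
    simpa only [smul_eq_mul] using h
  have hW2 : ∀ (z ξ η : EuclideanSpace ℝ (Fin d)),
      Integrable (fun a => p a y * Real.exp (-‖z - t • a‖^2/(2*s)) * (⟪ξ, a⟫ * ⟪η, a⟫)) := by
    intro z ξ η
    have h := integrable_weight t s hs hq0 hqm hqi (fun a => ⟪ξ, a⟫ * ⟪η, a⟫)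
      ((continuous_const.inner continuous_id).mul (continuous_const.inner continuous_id))
      (C := (‖ξ‖ * Real.sqrt d) * (‖η‖ * Real.sqrt d))
      (fun a ha => by
        rw [Real.norm_eq_abs, abs_mul]
        apply mul_le_mul
        · calc |⟪ξ, a⟫| ≤ ‖ξ‖ * ‖a‖ := abs_real_inner_le_norm _ _
            _ ≤ ‖ξ‖ * Real.sqrt d := mul_le_mul_of_nonneg_left (hqR a ha) (norm_nonneg ξ)
        · calc |⟪η, a⟫| ≤ ‖η‖ * ‖a‖ := abs_real_inner_le_norm _ _
            _ ≤ ‖η‖ * Real.sqrt d := mul_le_mul_of_nonneg_left (hqR a ha) (norm_nonneg η)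
        · exact abs_nonneg _
        · positivity) z
    simpa only [smul_eq_mul] using h
  have hWE : ∀ z : EuclideanSpace ℝ (Fin d),
      Integrable (fun a => (p a y * Real.exp (-‖z - t • a‖^2/(2*s))) • a) := by
    intro z
    exact integrable_weight t s hs hq0 hqm hqi (fun a => a) continuous_id
      (C := Real.sqrt d) hqR z
  -- applying the scalar derivative CLM
  have happly : ∀ (z ξ : EuclideanSpace ℝ (Fin d)),
      (∫ u, ((p u y * Real.exp (-‖z - t • u‖^2/(2*s)) * -(1/s)) •
          innerSL ℝ (z - t • u)).smulRight (1:ℝ)) ξ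
        = -(1/s) * (⟪z, ξ⟫ * (∫ u, p u y * Real.exp (-‖z - t • u‖^2/(2*s)))
            - t * ∫ u, p u y * Real.exp (-‖z - t • u‖^2/(2*s)) * ⟪ξ, u⟫) := by
    intro z ξ
    rw [ContinuousLinearMap.integral_apply (hZdint z)]
    have hpt : ∀ a : EuclideanSpace ℝ (Fin d),
        (((p a y * Real.exp (-‖z - t • a‖^2/(2*s)) * -(1/s)) •
          innerSL ℝ (z - t • a)).smulRight (1:ℝ)) ξ
        = (-(1/s) * ⟪z, ξ⟫) * (p a y * Real.exp (-‖z - t • a‖^2/(2*s)))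
          + ((1/s) * t) * (p a y * Real.exp (-‖z - t • a‖^2/(2*s)) * ⟪ξ, a⟫) := by
      intro a
      simp only [ContinuousLinearMap.smulRight_apply, ContinuousLinearMap.smul_apply,
        innerSL_apply_apply, smul_eq_mul, mul_one]
      rw [inner_sub_left, real_inner_smul_left, real_inner_comm a ξ]
      ring
    simp only [hpt]
    rw [integral_add ((hW0 z).const_mul _) ((hW1 z ξ).const_mul _),
      integral_const_mul, integral_const_mul]
    ring

  -- inner product of the vector integral
  have hI1 : ∀ (z ξ : EuclideanSpace ℝ (Fin d)),
      ⟪(∫ a, (p a y * Real.exp (-‖z - t • a‖^2/(2*s))) • a :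
          EuclideanSpace ℝ (Fin d)), ξ⟫
        = ∫ a, p a y * Real.exp (-‖z - t • a‖^2/(2*s)) * ⟪ξ, a⟫ := by
    intro z ξ
    rw [real_inner_comm, ← integral_inner (hWE z)]
    simp only [real_inner_smul_right]
  -- the gradient identity
  have hgrad : ∀ z : EuclideanSpace ℝ (Fin d),
      gradient (fun x' => Real.log (C₀ *
          ∫ u, p u y * Real.exp (-‖x' - t • u‖^2/(2*s)))) z
        = ((s⁻¹ * t) * (∫ u, p u y * Real.exp (-‖z - t • u‖^2/(2*s)))⁻¹) •
            (∫ u, (p u y * Real.exp (-‖z - t • u‖^2/(2*s))) • u) - s⁻¹ • z := by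
    intro z
    apply HasGradientAt.gradient
    rw [hasGradientAt_iff_hasFDerivAt]
    have hlog := ((hZder z).const_mul C₀).log (mul_pos hC₀ (hZpos z)).ne'
    have hEq : (InnerProductSpace.toDual ℝ (EuclideanSpace ℝ (Fin d)))
        (((s⁻¹ * t) * (∫ u, p u y * Real.exp (-‖z - t • u‖^2/(2*s)))⁻¹) •
            (∫ u, (p u y * Real.exp (-‖z - t • u‖^2/(2*s))) • u) - s⁻¹ • z)
        = (C₀ * ∫ u, p u y * Real.exp (-‖z - t • u‖^2/(2*s)))⁻¹ •
            (C₀ • (∫ u, ((p u y * Real.exp (-‖z - t • u‖^2/(2*s)) * -(1/s)) •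
              innerSL ℝ (z - t • u)).smulRight (1:ℝ))) := by
      ext ξ
      simp only [InnerProductSpace.toDual_apply_apply, ContinuousLinearMap.smul_apply,
        smul_eq_mul]
      rw [happly z ξ, inner_sub_left, real_inner_smul_left, real_inner_smul_left,
        hI1 z ξ]
      have hZ0 := hZne z
      generalize (∫ a, p a y * Real.exp (-‖z - t • a‖ ^ 2 / (2 * s)) * ⟪ξ, a⟫) = A
      generalize (∫ u, p u y * Real.exp (-‖z - t • u‖ ^ 2 / (2 * s))) = Z0 at hZ0 ⊢
      field_simp [hZ0, hC₀.ne', hsne]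
      ring
    rw [hEq]
    exact hlog
  -- rewrite the velocity field as an explicit function
  have hfun : (fun x' : EuclideanSpace ℝ (Fin d) => (1/t) • gradient
        (fun x'' => Real.log (C₀ *
          ∫ u, p u y * Real.exp (-‖x'' - t • u‖^2/(2*s)))) x' + (1/t) • x')
      = fun z => (1/t) • (((s⁻¹ * t) *
            (∫ u, p u y * Real.exp (-‖z - t • u‖^2/(2*s)))⁻¹) •
            (∫ u, (p u y * Real.exp (-‖z - t • u‖^2/(2*s))) • u) - s⁻¹ • z)
          + (1/t) • z := by
    funext z
    rw [hgrad z]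
  rw [hfun]

  have hIapply : ∀ (ξ η : EuclideanSpace ℝ (Fin d)),
      ⟪(∫ a, ((p a y * Real.exp (-‖x - t • a‖^2/(2*s)) * -(1/s)) •
          innerSL ℝ (x - t • a)).smulRight a) ξ, η⟫
        = -(1/s) * (⟪x, ξ⟫ * (∫ a, p a y * Real.exp (-‖x - t • a‖^2/(2*s)) * ⟪η, a⟫)
            - t * ∫ a, p a y * Real.exp (-‖x - t • a‖^2/(2*s)) * (⟪ξ, a⟫ * ⟪η, a⟫)) := by
    intro ξ η
    rw [ContinuousLinearMap.integral_apply (hIdint x)]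
    have hintc : Integrable (fun a => (((p a y * Real.exp (-‖x - t • a‖^2/(2*s)) * -(1/s)) •
        innerSL ℝ (x - t • a)).smulRight a) ξ) :=
      (ContinuousLinearMap.apply ℝ (EuclideanSpace ℝ (Fin d)) ξ).integrable_comp (hIdint x)
    rw [real_inner_comm, ← integral_inner hintc]
    have hpt : ∀ a : EuclideanSpace ℝ (Fin d),
        ⟪η, (((p a y * Real.exp (-‖x - t • a‖^2/(2*s)) * -(1/s)) •
          innerSL ℝ (x - t • a)).smulRight a) ξ⟫
        = (-(1/s) * ⟪x, ξ⟫) * (p a y * Real.exp (-‖x - t • a‖^2/(2*s)) * ⟪η, a⟫)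
          + ((1/s) * t) * (p a y * Real.exp (-‖x - t • a‖^2/(2*s)) * (⟪ξ, a⟫ * ⟪η, a⟫)) := by
      intro a
      simp only [ContinuousLinearMap.smulRight_apply, ContinuousLinearMap.smul_apply,
        innerSL_apply_apply, smul_eq_mul, real_inner_smul_right]
      rw [inner_sub_left, real_inner_smul_left, real_inner_comm a ξ]
      ring
    simp only [hpt]
    rw [integral_add ((hW1 x η).const_mul _) ((hW2 x ξ η).const_mul _),
      integral_const_mul, integral_const_mul]
    ring
  -- compute the derivative of the explicit function
  have h1 : HasFDerivAt
      (fun z : EuclideanSpace ℝ (Fin d) =>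
        (∫ u, p u y * Real.exp (-‖z - t • u‖^2/(2*s)))⁻¹)
      ((-((∫ u, p u y * Real.exp (-‖x - t • u‖^2/(2*s)))^2)⁻¹) •
        (∫ u, ((p u y * Real.exp (-‖x - t • u‖^2/(2*s)) * -(1/s)) •
          innerSL ℝ (x - t • u)).smulRight (1:ℝ))) x :=
    (hasDerivAt_inv (hZne x)).comp_hasFDerivAt x (hZder x)
  have h5 : fderiv ℝ (fun z : EuclideanSpace ℝ (Fin d) =>
        (1/t) • (((s⁻¹ * t) * (∫ u, p u y * Real.exp (-‖z - t • u‖^2/(2*s)))⁻¹) •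
            (∫ u, (p u y * Real.exp (-‖z - t • u‖^2/(2*s))) • u) - s⁻¹ • z)
          + (1/t) • z) x
      = (1/t) • (((s⁻¹ * t) * (∫ u, p u y * Real.exp (-‖x - t • u‖^2/(2*s)))⁻¹) • (∫ u, ((p u y * Real.exp (-‖x - t • u‖^2/(2*s)) * -(1/s)) • innerSL ℝ (x - t • u)).smulRight u) + ((s⁻¹ * t) • ((-((∫ u, p u y * Real.exp (-‖x - t • u‖^2/(2*s)))^2)⁻¹) • (∫ u, ((p u y * Real.exp (-‖x - t • u‖^2/(2*s)) * -(1/s)) • innerSL ℝ (x - t • u)).smulRight (1:ℝ)))).smulRight (∫ u, (p u y * Real.exp (-‖x - t • u‖^2/(2*s))) • u) - s⁻¹ • ContinuousLinearMap.id ℝ (EuclideanSpace ℝ (Fin d))) + (1/t) • ContinuousLinearMap.id ℝ (EuclideanSpace ℝ (Fin d)) := by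
    apply HasFDerivAt.fderiv
    exact ((((h1.const_mul (s⁻¹ * t)).smul (hIder x)).sub
      ((hasFDerivAt_id x).const_smul s⁻¹)).const_smul (1/t)).add
      ((hasFDerivAt_id x).const_smul (1/t))
  rw [h5]
  have hd1 : (∫ a, (p a y * Real.exp (-‖x - t • a‖^2/(2*s)) / (∫ u, p u y * Real.exp (-‖x - t • u‖^2/(2*s)))) * (⟪u, a⟫ * ⟪v, a⟫))
      = (∫ a, p a y * Real.exp (-‖x - t • a‖^2/(2*s)) * (⟪u, a⟫ * ⟪v, a⟫)) / (∫ u, p u y * Real.exp (-‖x - t • u‖^2/(2*s))) := by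
    rw [← integral_div]
    congr 1
    funext a
    ring
  have hd2 : (∫ a, (p a y * Real.exp (-‖x - t • a‖^2/(2*s)) / (∫ u, p u y * Real.exp (-‖x - t • u‖^2/(2*s)))) * ⟪u, a⟫)
      = (∫ a, p a y * Real.exp (-‖x - t • a‖^2/(2*s)) * ⟪u, a⟫) / (∫ u, p u y * Real.exp (-‖x - t • u‖^2/(2*s))) := by
    rw [← integral_div]
    congr 1
    funext a
    ring
  have hd3 : (∫ a, (p a y * Real.exp (-‖x - t • a‖^2/(2*s)) / (∫ u, p u y * Real.exp (-‖x - t • u‖^2/(2*s)))) * ⟪v, a⟫)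
      = (∫ a, p a y * Real.exp (-‖x - t • a‖^2/(2*s)) * ⟪v, a⟫) / (∫ u, p u y * Real.exp (-‖x - t • u‖^2/(2*s))) := by
    rw [← integral_div]
    congr 1
    funext a
    ring
  rw [hd1, hd2, hd3]
  simp only [ContinuousLinearMap.add_apply, ContinuousLinearMap.coe_smul', Pi.smul_apply,
    ContinuousLinearMap.sub_apply, ContinuousLinearMap.smulRight_apply,
    ContinuousLinearMap.smul_apply, ContinuousLinearMap.coe_id', id_eq, smul_eq_mul]
  simp only [inner_add_left, inner_sub_left, real_inner_smul_left]
  rw [hIapply u v, happly x u, hI1 x v]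
  have hZ1ne : (∫ u, p u y * Real.exp (-‖x - t • u‖^2/(2*s))) ≠ 0 := hZne x
  set Z1 : ℝ := ∫ u, p u y * Real.exp (-‖x - t • u‖^2/(2*s)) with hZ1
  set A2 : ℝ := ∫ a, p a y * Real.exp (-‖x - t • a‖^2/(2*s)) * (⟪u, a⟫ * ⟪v, a⟫) with hA2
  set A3 : ℝ := ∫ a, p a y * Real.exp (-‖x - t • a‖^2/(2*s)) * ⟪u, a⟫ with hA3
  set A4 : ℝ := ∫ a, p a y * Real.exp (-‖x - t • a‖^2/(2*s)) * ⟪v, a⟫ with hA4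
  field_simp [hsne, htne]
  rw [hsdef]
  ring
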